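/- Let Q : ℂ → Matrix (Fin K) (Fin K) ℂ have all entries holomorphic on ℂ, with Q(λ) symmetric for every λ, Q(t) a real matrix for every real t, and suppose that for every λ with Im λ > 0 and every nonzero real vector C : Fin K → ℝ one has Im(Cᵀ·Q(λ)·C) > 0. Then for every real t₀, the derivative Q'(t₀) is a real symmetric positive definite matrix: for every nonzero real vector C, the number Cᵀ·Q'(t₀)·C is real and strictly positive. -/

import Mathlib

open Matrix Complex Real Filter

lemma sin_neg_of_pi_lt_of_lt (t : ℝ) (h1 : π < t) (h2 : t < 2*π) : Real.sin t < 0 := by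
  have h := Real.sin_pos_of_pos_of_lt_pi (x := t - π) (by linarith) (by linarith)
  rw [Real.sin_sub_pi] at h; linarith

lemma exists_theta (n : ℕ) (hn : 1 ≤ n) (φ : ℝ) (hφ1 : -π < φ) (hφ2 : φ ≤ π)
    (h : ¬(n = 1 ∧ φ = 0)) :
    ∃ θ : ℝ, 0 < θ ∧ θ < π ∧ Real.sin (n*θ + φ) < 0 := by
  have pi_pos := Real.pi_pos
  rcases eq_or_lt_of_le hn with h1 | h2
  · have hφ : φ ≠ 0 := fun hφ => h ⟨h1.symm, hφ⟩
    rcases lt_or_gt_of_ne hφ with hneg | hpos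
    · refine ⟨-φ/2, by linarith, by linarith, ?_⟩
      rw [← h1]; push_cast
      have e : 1*(-φ/2) + φ = φ/2 := by ring
      rw [e]
      exact sin_neg_of_neg_of_neg_pi_lt (by linarith) (by linarith)
    · refine ⟨π - φ/2, by linarith, by linarith, ?_⟩
      rw [← h1]; push_cast
      have e : 1*(π - φ/2) + φ = π + φ/2 := by ring
      rw [e]
      exact sin_neg_of_pi_lt_of_lt _ (by linarith) (by linarith)
  · have hn2 : (2:ℝ) ≤ n := by exact_mod_cast h2
    have hnpos : (0:ℝ) < n := by linarith
    rcases le_or_gt φ (-π/2) with hle | hgt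
    · refine ⟨(-π/4 - φ)/n, div_pos (by linarith) hnpos, ?_, ?_⟩
      · rw [div_lt_iff₀ hnpos]; nlinarith
      · rw [mul_div_cancel₀ _ (ne_of_gt hnpos)]
        have e : -π/4 - φ + φ = -π/4 := by ring
        rw [e]
        exact sin_neg_of_neg_of_neg_pi_lt (by linarith) (by linarith)
    · refine ⟨(3*π/2 - φ)/n, div_pos (by linarith) hnpos, ?_, ?_⟩
      · rw [div_lt_iff₀ hnpos]; nlinarith
      · rw [mul_div_cancel₀ _ (ne_of_gt hnpos)]
        have e : 3*π/2 - φ + φ = 3*π/2 := by ring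
        rw [e]
        exact sin_neg_of_pi_lt_of_lt _ (by linarith) (by linarith)

theorem statement_12 {K : ℕ} (Q : ℂ → Matrix (Fin K) (Fin K) ℂ)
    (hdiff : ∀ i j : Fin K, Differentiable ℂ fun z : ℂ => Q z i j)
    (hsym : ∀ z : ℂ, (Q z).IsSymm)
    (hreal : ∀ (t : ℝ) (i j : Fin K), (Q (t : ℂ) i j).im = 0)
    (hup : ∀ z : ℂ, 0 < z.im → ∀ C : Fin K → ℝ, C ≠ 0 →
      0 < ((fun i => (C i : ℂ)) ⬝ᵥ (Q z *ᵥ fun i => (C i : ℂ))).im)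
    (t₀ : ℝ) (C : Fin K → ℝ) (hC : C ≠ 0) :
    ((fun i => (C i : ℂ)) ⬝ᵥ
        ((Matrix.of fun i j => deriv (fun z : ℂ => Q z i j) (t₀ : ℂ)) *ᵥ
          fun i => (C i : ℂ))).im = 0 ∧
      0 < ((fun i => (C i : ℂ)) ⬝ᵥ
        ((Matrix.of fun i j => deriv (fun z : ℂ => Q z i j) (t₀ : ℂ)) *ᵥ
          fun i => (C i : ℂ))).re := by
  set Cc : Fin K → ℂ := fun i => (C i : ℂ) with hCc
  set M : Matrix (Fin K) (Fin K) ℂ :=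
    Matrix.of fun i j => deriv (fun z : ℂ => Q z i j) (t₀ : ℂ) with hM
  set D : ℂ := Cc ⬝ᵥ (M *ᵥ Cc) with hD
  set f : ℂ → ℂ := fun z => Cc ⬝ᵥ (Q z *ᵥ Cc) with hf
  -- f is differentiable with derivative D at t₀
  have hfsum : f = fun z => ∑ i, Cc i * ∑ j, Q z i j * Cc j := by
    funext z; simp [hf, dotProduct, mulVec]
  have hDsum : D = ∑ i, Cc i * ∑ j, M i j * Cc j := by
    simp [hD, dotProduct, mulVec]
  have hDer : HasDerivAt f D (t₀ : ℂ) := by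
    rw [hfsum, hDsum]
    apply HasDerivAt.fun_sum
    intro i _
    apply HasDerivAt.const_mul
    apply HasDerivAt.fun_sum
    intro j _
    exact ((hdiff i j).differentiableAt.hasDerivAt).mul_const (Cc j)
  have hfd : Differentiable ℂ f := by
    rw [hfsum]
    apply Differentiable.fun_sum
    intro i _
    apply Differentiable.const_mul
    apply Differentiable.fun_sum
    intro j _
    exact (hdiff i j).mul_const (Cc j)
  have hfup : ∀ z : ℂ, 0 < z.im → 0 < (f z).im := fun z hz => hup z hz C hC
  have freal : ∀ t : ℝ, (f (t:ℂ)).im = 0 := by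
    intro t
    simp [hf, hCc, dotProduct, mulVec, Complex.im_sum, Complex.mul_im, hreal]
  set g : ℂ → ℂ := fun z => f z - f (t₀:ℂ) with hg
  have hgA : AnalyticAt ℂ g (t₀:ℂ) := (hfd.analyticAt (t₀:ℂ)).sub analyticAt_const
  have hnz : ¬ (∀ᶠ z in nhds (t₀:ℂ), g z = 0) := by
    intro hev
    have hfa : AnalyticOnNhd ℂ f Set.univ := fun z _ => hfd.analyticAt z
    have hca : AnalyticOnNhd ℂ (fun _ => f (t₀:ℂ)) Set.univ := fun z _ => (analyticAt_const : AnalyticAt ℂ (fun _ : ℂ => f (t₀:ℂ)) z)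
    have heq := hfa.eqOn_of_preconnected_of_eventuallyEq hca isPreconnected_univ
      (Set.mem_univ (t₀:ℂ)) (hev.mono fun z hz => by
        have : f z - f (t₀:ℂ) = 0 := hz
        simpa [sub_eq_zero] using this)
    have h1 : f ((t₀:ℂ) + Complex.I) = f (t₀:ℂ) := heq (Set.mem_univ _)
    have h2 : 0 < (f ((t₀:ℂ)+Complex.I)).im := hfup _ (by simp)
    rw [h1, freal t₀] at h2
    exact lt_irrefl _ h2
  have hord : analyticOrderAt g (t₀:ℂ) ≠ ⊤ := fun h' => hnz (analyticOrderAt_eq_top.mp h')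
  obtain ⟨n, hn⟩ := WithTop.ne_top_iff_exists.mp hord
  obtain ⟨h, hh, hhne, hfac⟩ := (hgA.analyticOrderAt_eq_natCast (n := n)).mp hn.symm
  have hgzero : g (t₀:ℂ) = 0 := by simp [hg]
  have hn1 : 1 ≤ n := by
    rcases Nat.eq_zero_or_pos n with h0 | h1
    · exfalso
      have := hfac.self_of_nhds
      rw [h0, pow_zero, one_smul, hgzero] at this
      exact hhne this.symm
    · exact h1
  set a : ℂ := h (t₀:ℂ) with ha
  set φ : ℝ := a.arg with hφ
  -- key claim
  have hclaim : n = 1 ∧ φ = 0 := by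
    by_contra hcon
    obtain ⟨θ, hθ0, hθπ, hsin⟩ :=
      exists_theta n hn1 φ (a.arg_mem_Ioc.1) (a.arg_mem_Ioc.2) hcon
    set u : ℂ := Complex.exp (↑θ * Complex.I) with hu
    have habs : (0:ℝ) < ‖a‖ := by
      simpa [norm_pos_iff] using hhne
    have hupow : u ^ n = Complex.exp ((↑(n*θ:ℝ)) * Complex.I) := by
      rw [hu, ← Complex.exp_nat_mul]
      congr 1; push_cast; ring
    have hare : a.re = ‖a‖ * Real.cos φ := by
      rw [hφ, Complex.cos_arg hhne]; field_simp
    have haim : a.im = ‖a‖ * Real.sin φ := by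
      rw [hφ, Complex.sin_arg]; field_simp
    have hval : (u ^ n * a).im = ‖a‖ * Real.sin (↑n * θ + φ) := by
      rw [Complex.mul_im, hupow, Complex.exp_ofReal_mul_I_re, Complex.exp_ofReal_mul_I_im,
        Real.sin_add, hare, haim]
      push_cast; ring
    have hlt : (u ^ n * a).im < 0 := by
      rw [hval]; exact mul_neg_of_pos_of_neg habs hsin
    -- tendsto along ε → 0⁺
    have htend : Tendsto (fun ε : ℝ => (t₀:ℂ) + ↑ε * u)
        (nhdsWithin (0:ℝ) (Set.Ioi (0:ℝ))) (nhds (t₀:ℂ)) := by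
      apply Filter.Tendsto.mono_left _ nhdsWithin_le_nhds
      have hc : Continuous (fun ε : ℝ => (t₀:ℂ) + ↑ε * u) :=
        continuous_const.add (Complex.continuous_ofReal.mul continuous_const)
      have := hc.tendsto 0
      simpa using this
    have htendh : Tendsto (fun ε : ℝ => h ((t₀:ℂ) + ↑ε * u))
        (nhdsWithin (0:ℝ) (Set.Ioi (0:ℝ))) (nhds a) := hh.continuousAt.tendsto.comp htend
    have htend2 : Tendsto (fun ε : ℝ => u^n * h ((t₀:ℂ) + ↑ε * u))
        (nhdsWithin (0:ℝ) (Set.Ioi (0:ℝ))) (nhds (u^n * a)) := tendsto_const_nhds.mul htendh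
    have htend3 : Tendsto (fun ε : ℝ => (u^n * h ((t₀:ℂ) + ↑ε * u)).im)
        (nhdsWithin (0:ℝ) (Set.Ioi (0:ℝ))) (nhds ((u^n * a).im)) :=
      (Complex.continuous_im.tendsto _).comp htend2
    have heven : ∀ᶠ (ε : ℝ) in nhdsWithin (0:ℝ) (Set.Ioi (0:ℝ)),
        (u^n * h ((t₀:ℂ) + ↑ε * u)).im < 0 := htend3.eventually_lt_const hlt
    have hfac2 : ∀ᶠ (ε : ℝ) in nhdsWithin (0:ℝ) (Set.Ioi (0:ℝ)),
        g ((t₀:ℂ) + ↑ε * u) = (((t₀:ℂ) + ↑ε * u) - (t₀:ℂ))^n • h ((t₀:ℂ) + ↑ε * u) :=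
      htend.eventually hfac
    obtain ⟨ε, hε1, hε2, hε3⟩ := (heven.and (hfac2.and self_mem_nhdsWithin)).exists
    have hεpos : 0 < ε := hε3
    have hzim : 0 < ((t₀:ℂ) + ↑ε * u).im := by
      have : ((t₀:ℂ) + ↑ε * u).im = ε * Real.sin θ := by
        simp [hu, Complex.add_im, Complex.mul_im, Complex.exp_ofReal_mul_I_im]
      rw [this]
      exact mul_pos hεpos (Real.sin_pos_of_pos_of_lt_pi hθ0 hθπ)
    have hfpos : 0 < (f ((t₀:ℂ) + ↑ε * u)).im := hfup _ hzim
    have hgim : (g ((t₀:ℂ) + ↑ε * u)).im = (f ((t₀:ℂ) + ↑ε * u)).im := by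
      simp [hg, Complex.sub_im, freal t₀]
    have hgneg : (g ((t₀:ℂ) + ↑ε * u)).im < 0 := by
      rw [hε2]
      have e1 : (((t₀:ℂ) + ↑ε * u) - (t₀:ℂ)) = ↑ε * u := by ring
      rw [e1, smul_eq_mul, mul_pow]
      have e2 : ((↑ε:ℂ)^n * u^n * h ((t₀:ℂ) + ↑ε * u)).im
          = ε^n * (u^n * h ((t₀:ℂ) + ↑ε * u)).im := by
        simp [mul_assoc, Complex.mul_im, ← Complex.ofReal_pow]
      rw [e2]
      exact mul_neg_of_pos_of_neg (pow_pos hεpos n) hε1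
    linarith [hgim ▸ hgneg, hfpos]
  obtain ⟨hne1, hφ0⟩ := hclaim
  subst hne1
  obtain ⟨hre0, him0⟩ := Complex.arg_eq_zero_iff.mp hφ0
  have hare : 0 < a.re := by
    rcases lt_or_eq_of_le hre0 with h' | h'
    · exact h'
    · exfalso; exact hhne (Complex.ext h'.symm him0)
  -- derivative of g at t₀ is a
  have hprod : HasDerivAt (fun z => (z - (t₀:ℂ)) * h z) a (t₀:ℂ) := by
    have h1 : HasDerivAt (fun z : ℂ => z - (t₀:ℂ)) 1 (t₀:ℂ) := (hasDerivAt_id _).sub_const _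
    have h2 : HasDerivAt h (deriv h (t₀:ℂ)) (t₀:ℂ) := hh.differentiableAt.hasDerivAt
    have := h1.fun_mul h2
    simpa [ha] using this
  have hgd : HasDerivAt g a (t₀:ℂ) := by
    apply hprod.congr_of_eventuallyEq
    exact hfac.mono fun z hz => by rw [hz]; simp [smul_eq_mul]
  have hfd2 : HasDerivAt f a (t₀:ℂ) := by
    have := hgd.add_const (f (t₀:ℂ))
    apply this.congr_of_eventuallyEq
    filter_upwards with z
    simp [hg]
  have hDa : D = a := hDer.unique hfd2
  rw [hDa]
  exact ⟨him0, hare⟩
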